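/- Let α > 0 and let f : Ḡ×I'×I×S → ℝ be continuous, continuously differentiable in its second (primed) variable E', with ∂f/∂E' α-Hölder in E' uniformly (f ∈ C(Ḡ×S×I, C^{1+α}(I'))). Then for every x ∈ Ḡ and E ∈ [E₀,E_m) one may interchange the spherical integration and the second-order Hadamard finite part: ∫_S ( p.f.∫_E^{E_m} f(x,E',E,ω)/(E'−E)² dE' ) dω = p.f.∫_E^{E_m} ( ∫_S f(x,E',E,ω) dω )/(E'−E)² dE', all integrals and finite parts existing. -/

import Mathlib

open MeasureTheory Filter Set Metric
open scoped Topology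
open intervalIntegral

noncomputable section

abbrev E3 : Type := EuclideanSpace ℝ (Fin 3)

/-- The surface measure on the unit sphere `S² ⊂ ℝ³`, viewed as a measure on `ℝ³`
(carried on the unit sphere). -/
def nuS : Measure E3 := ((volume : Measure E3).toSphere).map Subtype.val

/-- Hadamard finite part of order 2 with upper limit `b`, `d` being the right derivative
`g'(x⁺)`. -/
def HasPF2Upper (g : ℝ → ℝ) (d x b L : ℝ) : Prop :=
  Tendsto (fun ε : ℝ => (∫ t in (x + ε)..b, g t / (t - x) ^ 2) + d * Real.log ε - g x / ε)
    (𝓝[>] (0 : ℝ)) (𝓝 L)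

lemma integrableOn_taylor_quot {g : ℝ → ℝ} {E Em d K β : ℝ} (hEm : E < Em) (hβ : 0 < β)
    (hg : ContinuousOn g (Icc E Em))
    (hb : ∀ t ∈ Icc E Em, |g t - g E - d * (t - E)| ≤ K * ((t - E) ^ β * (t - E))) :
    IntegrableOn (fun t => (g t - g E - d * (t - E)) / (t - E) ^ 2) (Ioc E Em) := by
  set h : ℝ → ℝ := fun t => (g t - g E - d * (t - E)) / (t - E) ^ 2 with hh
  have hBint : IntervalIntegrable (fun t : ℝ => K * (t - E) ^ (β - 1)) volume E Em := by
    have h1 : IntervalIntegrable (fun u : ℝ => u ^ (β - 1)) volume (E - E) (Em - E) :=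
      intervalIntegrable_rpow' (by linarith)
    simpa using ((h1.comp_sub_right E).const_mul K)
  have hconth : ContinuousOn h (Ioc E Em) := by
    apply ContinuousOn.div
    · exact ((hg.mono Ioc_subset_Icc_self).sub continuousOn_const).sub
        (continuousOn_const.mul ((continuousOn_id.sub continuousOn_const)))
    · exact ((continuousOn_id.sub continuousOn_const).pow 2)
    · intro t ht
      have : t - E ≠ 0 := by have := ht.1; intro h; nlinarith [ht.1]
      positivity
  have hmeas : AEStronglyMeasurable h (volume.restrict (Ioc E Em)) :=
    hconth.aestronglyMeasurable measurableSet_Ioc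
  have hBint' : IntegrableOn (fun t : ℝ => K * (t - E) ^ (β - 1)) (Ioc E Em) :=
    (intervalIntegrable_iff_integrableOn_Ioc_of_le hEm.le).1 hBint
  refine hBint'.mono' hmeas ?_
  rw [ae_restrict_iff' measurableSet_Ioc]
  filter_upwards with t ht
  have htE : 0 < t - E := by linarith [ht.1]
  have h2 : (0:ℝ) < (t - E) ^ 2 := by positivity
  rw [Real.norm_eq_abs, hh]
  rw [abs_div, abs_of_pos h2, div_le_iff₀ h2]
  calc |g t - g E - d * (t - E)| ≤ K * ((t - E) ^ β * (t - E)) :=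
        hb t ⟨ht.1.le, ht.2⟩
    _ = K * (t - E) ^ (β - 1) * (t - E) ^ 2 := by
        rw [Real.rpow_sub htE, Real.rpow_one]
        field_simp

lemma hasPF2Upper_of_taylor {g : ℝ → ℝ} {E Em d K β : ℝ} (hEm : E < Em) (hβ : 0 < β)
    (hg : ContinuousOn g (Icc E Em))
    (hb : ∀ t ∈ Icc E Em, |g t - g E - d * (t - E)| ≤ K * ((t - E) ^ β * (t - E))) :
    HasPF2Upper g d E Em
      ((∫ t in E..Em, (g t - g E - d * (t - E)) / (t - E) ^ 2) - g E / (Em - E)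
        + d * Real.log (Em - E)) := by
  set h : ℝ → ℝ := fun t => (g t - g E - d * (t - E)) / (t - E) ^ 2 with hh
  have hIoc : IntegrableOn h (Ioc E Em) := integrableOn_taylor_quot hEm hβ hg hb
  have hIcc : IntegrableOn h (Icc E Em) := by
    rw [integrableOn_Icc_iff_integrableOn_Ioc]; exact hIoc
  have hconth : ContinuousOn h (Ioc E Em) := by
    apply ContinuousOn.div
    · exact ((hg.mono Ioc_subset_Icc_self).sub continuousOn_const).sub
        (continuousOn_const.mul ((continuousOn_id.sub continuousOn_const)))
    · exact ((continuousOn_id.sub continuousOn_const).pow 2)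
    · intro t ht
      have h1 : 0 < t - E := by linarith [ht.1]
      positivity
  have hcontprim : ContinuousOn (fun a => ∫ t in a..Em, h t) (Icc E Em) := by
    have h2 : IntegrableOn h (uIcc E Em) volume := by rwa [uIcc_of_le hEm.le]
    have := continuousOn_primitive_interval_left h2
    rwa [uIcc_of_le hEm.le] at this
  have hmemIoo : Ioo (0:ℝ) (Em - E) ∈ 𝓝[>] (0:ℝ) :=
    Ioo_mem_nhdsGT_of_mem ⟨le_refl 0, sub_pos.2 hEm⟩
  have h1 : Tendsto (fun ε : ℝ => E + ε) (𝓝[>] (0:ℝ)) (𝓝[Icc E Em] E) := by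
    apply tendsto_nhdsWithin_of_tendsto_nhds_of_eventually_within
    · have : Tendsto (fun ε : ℝ => E + ε) (𝓝 (0:ℝ)) (𝓝 (E + 0)) :=
        tendsto_const_nhds.add tendsto_id
      simpa using this.mono_left nhdsWithin_le_nhds
    · filter_upwards [hmemIoo] with ε hε
      exact ⟨by linarith [hε.1], by linarith [hε.2]⟩
  have hψ : Tendsto (fun ε => ∫ t in (E + ε)..Em, h t) (𝓝[>] (0:ℝ))
      (𝓝 (∫ t in E..Em, h t)) :=
    Filter.Tendsto.comp (hcontprim E (left_mem_Icc.2 hEm.le)) h1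
  have hT : Tendsto
      (fun ε => (∫ t in (E + ε)..Em, h t) - g E / (Em - E) + d * Real.log (Em - E))
      (𝓝[>] (0:ℝ))
      (𝓝 ((∫ t in E..Em, h t) - g E / (Em - E) + d * Real.log (Em - E))) :=
    (hψ.sub tendsto_const_nhds).add tendsto_const_nhds
  apply hT.congr'
  filter_upwards [hmemIoo] with ε hε
  have hε0 : 0 < ε := hε.1
  have hεE : ε < Em - E := hε.2
  have haE : E < E + ε := by linarith
  have haEm : E + ε ≤ Em := by linarith
  have hsub : Icc (E + ε) Em ⊆ Ioc E Em := fun t ht => ⟨lt_of_lt_of_le haE ht.1, ht.2⟩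
  have hu : uIcc (E + ε) Em = Icc (E + ε) Em := uIcc_of_le haEm
  have hne : ∀ t ∈ Icc (E + ε) Em, t - E ≠ 0 := by
    intro t ht
    have h1 : 0 < t - E := by linarith [ht.1]
    exact h1.ne'
  have i_h : IntervalIntegrable h volume (E + ε) Em := by
    apply ContinuousOn.intervalIntegrable
    rw [hu]; exact hconth.mono hsub
  have c2 : ContinuousOn (fun t : ℝ => g E * (1 / (t - E) ^ 2)) (Icc (E + ε) Em) := by
    apply continuousOn_const.mul
    apply ContinuousOn.div continuousOn_const ((continuousOn_id.sub continuousOn_const).pow 2)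
    intro t ht
    have h1 : 0 < t - E := by linarith [ht.1]
    exact pow_ne_zero _ h1.ne'
  have c3 : ContinuousOn (fun t : ℝ => d * (1 / (t - E))) (Icc (E + ε) Em) := by
    apply continuousOn_const.mul
    apply ContinuousOn.div continuousOn_const (continuousOn_id.sub continuousOn_const)
    intro t ht
    have h1 : 0 < t - E := by linarith [ht.1]
    exact h1.ne'
  have i2 : IntervalIntegrable (fun t : ℝ => g E * (1 / (t - E) ^ 2)) volume (E + ε) Em := by
    apply ContinuousOn.intervalIntegrable; rwa [hu]
  have i3 : IntervalIntegrable (fun t : ℝ => d * (1 / (t - E))) volume (E + ε) Em := by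
    apply ContinuousOn.intervalIntegrable; rwa [hu]
  have hnot : (0:ℝ) ∉ uIcc ε (Em - E) := by
    rw [uIcc_of_le hεE.le]; intro hmem; linarith [hmem.1]
  have A2 : (∫ t in (E + ε)..Em, g E * (1 / (t - E) ^ 2))
      = g E * (1 / ε - 1 / (Em - E)) := by
    rw [intervalIntegral.integral_const_mul]
    congr 1
    have hcomp : (∫ t in (E + ε)..Em, 1 / (t - E) ^ 2)
        = ∫ u in (E + ε - E)..(Em - E), 1 / u ^ 2 :=
      intervalIntegral.integral_comp_sub_right (fun u => 1 / u ^ 2) E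
    rw [hcomp, add_sub_cancel_left]
    have hz : (∫ u in ε..(Em - E), u ^ (-2 : ℤ))
        = ((Em - E) ^ (-2 + 1 : ℤ) - ε ^ (-2 + 1 : ℤ)) / ((-2 : ℤ) + 1) :=
      integral_zpow (Or.inr ⟨by norm_num, hnot⟩)
    have heq : (fun u : ℝ => 1 / u ^ 2) = fun u : ℝ => u ^ (-2 : ℤ) := by
      funext u; rw [zpow_neg, one_div]; norm_cast
    rw [heq, hz]
    norm_num
    ring
  have A3 : (∫ t in (E + ε)..Em, d * (1 / (t - E)))
      = d * (Real.log (Em - E) - Real.log ε) := by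
    rw [intervalIntegral.integral_const_mul]
    congr 1
    have hcomp : (∫ t in (E + ε)..Em, 1 / (t - E))
        = ∫ u in (E + ε - E)..(Em - E), 1 / u :=
      intervalIntegral.integral_comp_sub_right (fun u => 1 / u) E
    rw [hcomp, add_sub_cancel_left, integral_one_div hnot,
      Real.log_div (by linarith) hε0.ne']
  have key : (∫ t in (E + ε)..Em, g t / (t - E) ^ 2)
      = (∫ t in (E + ε)..Em, h t) + g E * (1 / ε - 1 / (Em - E))
        + d * (Real.log (Em - E) - Real.log ε) := by
    have hpt : EqOn (fun t : ℝ => g t / (t - E) ^ 2)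
        (fun t : ℝ => h t + g E * (1 / (t - E) ^ 2) + d * (1 / (t - E)))
        (uIcc (E + ε) Em) := by
      rw [hu]; intro t ht
      have h0 : t - E ≠ 0 := hne t ht
      simp only [hh]
      field_simp
      ring
    rw [intervalIntegral.integral_congr hpt,
      intervalIntegral.integral_add (i_h.add i2) i3,
      intervalIntegral.integral_add i_h i2, A2, A3]
  simp only [key]
  field_simp
  ring

lemma taylor_quot_norm_le {g : ℝ → ℝ} {E Em d K β t : ℝ} (hβ : 0 < β)
    (hb : |g t - g E - d * (t - E)| ≤ K * ((t - E) ^ β * (t - E))) (ht : t ∈ Ioc E Em) :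
    ‖(g t - g E - d * (t - E)) / (t - E) ^ 2‖ ≤ K * (t - E) ^ (β - 1) := by
  have htE : 0 < t - E := by linarith [ht.1]
  have h2 : (0:ℝ) < (t - E) ^ 2 := by positivity
  rw [Real.norm_eq_abs, abs_div, abs_of_pos h2, div_le_iff₀ h2]
  calc |g t - g E - d * (t - E)| ≤ K * ((t - E) ^ β * (t - E)) := hb
    _ = K * (t - E) ^ (β - 1) * (t - E) ^ 2 := by
        rw [Real.rpow_sub htE, Real.rpow_one]
        field_simp

lemma rpow_shift_integrableOn {E Em r K : ℝ} (h : -1 < r) (hle : E ≤ Em) :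
    IntegrableOn (fun t : ℝ => K * (t - E) ^ r) (Ioc E Em) volume := by
  have h1 : IntervalIntegrable (fun u : ℝ => u ^ r) volume (E - E) (Em - E) :=
    intervalIntegrable_rpow' h
  have h2 : IntervalIntegrable (fun t : ℝ => K * (t - E) ^ r) volume E Em := by
    simpa using ((h1.comp_sub_right E).const_mul K)
  exact (intervalIntegrable_iff_integrableOn_Ioc_of_le hle).1 h2

lemma taylor_bound_of_holder {g g' : ℝ → ℝ} {E₀ Em E C α : ℝ} (hα : 0 < α) (hC : 0 ≤ C)
    (hE : E ∈ Icc E₀ Em)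
    (hderiv : ∀ s ∈ Icc E₀ Em, HasDerivWithinAt g (g' s) (Icc E₀ Em) s)
    (hH : ∀ s ∈ Icc E₀ Em, |g' s - g' E| ≤ C * |s - E| ^ α) :
    ∀ t ∈ Icc E Em, |g t - g E - g' E * (t - E)| ≤ C * ((t - E) ^ α * (t - E)) := by
  intro t ht
  have htE : E ≤ t := ht.1
  have hsub : Icc E t ⊆ Icc E₀ Em := fun y hy => ⟨le_trans hE.1 hy.1, le_trans hy.2 ht.2⟩
  set F : ℝ → ℝ := fun y => g y - g' E * y with hF
  have hd : ∀ y ∈ Icc E t, HasDerivWithinAt F (g' y - g' E) (Icc E t) y := by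
    intro y hy
    have h1 : HasDerivWithinAt (fun y : ℝ => g' E * y) (g' E) (Icc E t) y := by
      simpa using (hasDerivWithinAt_id y (Icc E t)).const_mul (g' E)
    exact ((hderiv y (hsub hy)).mono hsub).sub h1
  have hbd : ∀ y ∈ Icc E t, ‖g' y - g' E‖ ≤ C * (t - E) ^ α := by
    intro y hy
    rw [Real.norm_eq_abs]
    refine le_trans (hH y (hsub hy)) ?_
    apply mul_le_mul_of_nonneg_left _ hC
    rw [abs_of_nonneg (by linarith [hy.1] : (0:ℝ) ≤ y - E)]
    exact Real.rpow_le_rpow (by linarith [hy.1]) (by linarith [hy.2]) hα.le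
  have hmvt := Convex.norm_image_sub_le_of_norm_hasDerivWithin_le hd hbd (convex_Icc E t)
    (left_mem_Icc.2 htE) (right_mem_Icc.2 htE)
  rw [Real.norm_eq_abs, Real.norm_eq_abs] at hmvt
  have heq : g t - g E - g' E * (t - E) = F t - F E := by simp only [hF]; ring
  rw [heq]
  calc |F t - F E| ≤ C * (t - E) ^ α * |t - E| := hmvt
    _ = C * ((t - E) ^ α * (t - E)) := by
        rw [abs_of_nonneg (by linarith : (0:ℝ) ≤ t - E)]; ring

instance : IsFiniteMeasure nuS := by
  constructor
  rw [nuS, Measure.map_apply measurable_subtype_coe MeasurableSet.univ]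
  exact measure_lt_top _ _

lemma nuS_ae_sphere : ∀ᵐ ω ∂nuS, ω ∈ sphere (0 : E3) 1 := by
  rw [nuS]
  exact (ae_map_iff measurable_subtype_coe.aemeasurable
    ((isClosed_sphere).measurableSet)).2 (by filter_upwards with ω using ω.2)

lemma integrable_sphere {φ : E3 → ℝ} (hφ : ContinuousOn φ (sphere (0:E3) 1)) :
    Integrable φ nuS := by
  have h1 : nuS.restrict (sphere (0:E3) 1) = nuS :=
    Measure.restrict_eq_self_of_ae_mem nuS_ae_sphere
  have h2 : IntegrableOn φ (sphere (0:E3) 1) nuS :=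
    hφ.integrableOn_compact (isCompact_sphere _ _)
  rwa [IntegrableOn, h1] at h2

/-- for `f ∈ C(Ḡ×S×I, C^{1+α}(I'))` (with `f' = ∂f/∂E'` continuous,
`α`-Hölder in `E'` uniformly), one may interchange the spherical integration and the
second-order Hadamard finite part:
`∫_S ( p.f.∫_E^{E_m} f(x,E',E,ω)/(E'−E)² dE' ) dω
 = p.f.∫_E^{E_m} ( ∫_S f(x,E',E,ω) dω )/(E'−E)² dE'`, all the pieces existing. -/
theorem stmt7 (G : Set E3) (hGopen : IsOpen G) (hGbdd : Bornology.IsBounded G)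
    (E₀ Em α : ℝ) (hE₀ : 0 ≤ E₀) (hI : E₀ < Em) (hα : 0 < α)
    (f f' : E3 → ℝ → ℝ → E3 → ℝ) (C : ℝ)
    (hf : ContinuousOn (fun p : E3 × ℝ × ℝ × E3 => f p.1 p.2.1 p.2.2.1 p.2.2.2)
      (closure G ×ˢ Set.Icc E₀ Em ×ˢ Set.Icc E₀ Em ×ˢ sphere (0 : E3) 1))
    (hf' : ContinuousOn (fun p : E3 × ℝ × ℝ × E3 => f' p.1 p.2.1 p.2.2.1 p.2.2.2)
      (closure G ×ˢ Set.Icc E₀ Em ×ˢ Set.Icc E₀ Em ×ˢ sphere (0 : E3) 1))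
    (hderiv : ∀ x ∈ closure G, ∀ E ∈ Set.Icc E₀ Em, ∀ ω ∈ sphere (0 : E3) 1,
      ∀ E' ∈ Set.Icc E₀ Em,
      HasDerivWithinAt (fun s => f x s E ω) (f' x E' E ω) (Set.Icc E₀ Em) E')
    (hHolder : ∀ x ∈ closure G, ∀ E ∈ Set.Icc E₀ Em, ∀ ω ∈ sphere (0 : E3) 1,
      ∀ E₁' ∈ Set.Icc E₀ Em, ∀ E₂' ∈ Set.Icc E₀ Em,
      |f' x E₁' E ω - f' x E₂' E ω| ≤ C * |E₁' - E₂'| ^ α) :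
    ∀ x ∈ closure G, ∀ E ∈ Set.Ico E₀ Em,
      ∃ (S : E3 → ℝ) (L : ℝ),
        (∀ ω ∈ sphere (0 : E3) 1,
          HasPF2Upper (fun E' => f x E' E ω) (f' x E E ω) E Em (S ω)) ∧
        Integrable S nuS ∧
        HasDerivWithinAt (fun E' => ∫ ω, f x E' E ω ∂nuS)
          (∫ ω, f' x E E ω ∂nuS) (Set.Ici E) E ∧
        HasPF2Upper (fun E' => ∫ ω, f x E' E ω ∂nuS)
          (∫ ω, f' x E E ω ∂nuS) E Em L ∧
        ∫ ω, S ω ∂nuS = L := by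
  intro x hx E hE
  obtain ⟨hE0, hEm⟩ := hE
  have hEI : E ∈ Icc E₀ Em := ⟨hE0, hEm.le⟩
  have hsubI : Icc E Em ⊆ Icc E₀ Em := Icc_subset_Icc hE0 le_rfl
  have hIocsub : Ioc E Em ⊆ Icc E₀ Em := fun t ht => ⟨le_trans hE0 ht.1.le, ht.2⟩
  set Sp : Set E3 := sphere (0 : E3) 1 with hSp
  -- C is nonnegative
  have hC : 0 ≤ C := by
    obtain ⟨ω0, hω0⟩ : Sp.Nonempty :=
      NormedSpace.sphere_nonempty.mpr (by norm_num)
    have h2 := hHolder x hx E₀ ⟨le_rfl, hI.le⟩ ω0 hω0 Em ⟨hI.le, le_rfl⟩ E₀ ⟨le_rfl, hI.le⟩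
    have hp : 0 < |Em - E₀| ^ α :=
      Real.rpow_pos_of_pos (abs_pos.2 (sub_ne_zero.2 (ne_of_gt hI))) α
    nlinarith [abs_nonneg (f' x Em E₀ ω0 - f' x E₀ E₀ ω0)]
  -- continuity in E' for fixed ω
  have hgω : ∀ ω ∈ Sp, ContinuousOn (fun t => f x t E ω) (Icc E₀ Em) := by
    intro ω hω
    have hmap : MapsTo (fun t : ℝ => ((x, t, E, ω) : E3 × ℝ × ℝ × E3)) (Icc E₀ Em)
        (closure G ×ˢ Icc E₀ Em ×ˢ Icc E₀ Em ×ˢ Sp) := fun t ht => ⟨hx, ht, hEI, hω⟩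
    exact hf.comp (by fun_prop) hmap
  -- continuity in ω for fixed t
  have hfω : ∀ t ∈ Icc E₀ Em, ContinuousOn (fun ω => f x t E ω) Sp := by
    intro t ht
    have hmap : MapsTo (fun ω : E3 => ((x, t, E, ω) : E3 × ℝ × ℝ × E3)) Sp
        (closure G ×ˢ Icc E₀ Em ×ˢ Icc E₀ Em ×ˢ Sp) := fun ω hω => ⟨hx, ht, hEI, hω⟩
    exact hf.comp (by fun_prop) hmap
  have hf'ω : ∀ t ∈ Icc E₀ Em, ContinuousOn (fun ω => f' x t E ω) Sp := by
    intro t ht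
    have hmap : MapsTo (fun ω : E3 => ((x, t, E, ω) : E3 × ℝ × ℝ × E3)) Sp
        (closure G ×ˢ Icc E₀ Em ×ˢ Icc E₀ Em ×ˢ Sp) := fun ω hω => ⟨hx, ht, hEI, hω⟩
    exact hf'.comp (by fun_prop) hmap
  -- integrability over the sphere for fixed t
  have hFin : ∀ t ∈ Icc E₀ Em, Integrable (fun ω => f x t E ω) nuS :=
    fun t ht => integrable_sphere (hfω t ht)
  have hF'in : Integrable (fun ω => f' x E E ω) nuS := integrable_sphere (hf'ω E hEI)
  -- Taylor bound per ω
  have hTay : ∀ ω ∈ Sp, ∀ t ∈ Icc E Em,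
      |f x t E ω - f x E E ω - f' x E E ω * (t - E)| ≤ C * ((t - E) ^ α * (t - E)) := by
    intro ω hω
    apply taylor_bound_of_holder (g := fun t => f x t E ω) (g' := fun s => f' x s E ω) hα hC hEI
    · intro s hs; exact hderiv x hx E hEI ω hω s hs
    · intro s hs; exact hHolder x hx E hEI ω hω s hs E hEI
  -- the per-ω integrand of the finite part
  set hfun : E3 → ℝ → ℝ := fun ω t =>
    (f x t E ω - f x E E ω - f' x E E ω * (t - E)) / (t - E) ^ 2 with hhfun
  set S : E3 → ℝ := fun ω => (∫ t in E..Em, hfun ω t) - f x E E ω / (Em - E)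
    + f' x E E ω * Real.log (Em - E) with hS
  -- pointwise finite part
  have hPFω : ∀ ω ∈ Sp, HasPF2Upper (fun E' => f x E' E ω) (f' x E E ω) E Em (S ω) :=
    fun ω hω => hasPF2Upper_of_taylor hEm hα ((hgω ω hω).mono hsubI) (hTay ω hω)
  -- per-ω integrability of hfun on Ioc E Em
  have hIoω : ∀ ω ∈ Sp, IntegrableOn (hfun ω) (Ioc E Em) volume :=
    fun ω hω => integrableOn_taylor_quot hEm hα ((hgω ω hω).mono hsubI) (hTay ω hω)
  set μ : Measure ℝ := volume.restrict (Ioc E Em) with hμ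
  -- a.e. product membership
  have hprod_ae : ∀ᵐ p ∂(nuS.prod μ), p ∈ Sp ×ˢ Ioc E Em := by
    rw [ae_iff]
    have hss : {p : E3 × ℝ | ¬ p ∈ Sp ×ˢ Ioc E Em} ⊆
        (Spᶜ ×ˢ (univ : Set ℝ)) ∪ ((univ : Set E3) ×ˢ (Ioc E Em)ᶜ) := by
      intro p hp
      simp only [mem_setOf_eq, mem_prod, not_and_or] at hp
      rcases hp with h | h
      · exact Or.inl ⟨h, mem_univ _⟩
      · exact Or.inr ⟨mem_univ _, h⟩
    apply measure_mono_null hss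
    apply measure_union_null
    · rw [Measure.prod_prod]
      have h0 : nuS Spᶜ = 0 := by
        have := nuS_ae_sphere
        rwa [ae_iff] at this
      simp [h0]
    · rw [Measure.prod_prod, hμ, Measure.restrict_apply measurableSet_Ioc.compl]
      simp
  have hrestr : (nuS.prod μ).restrict (Sp ×ˢ Ioc E Em) = nuS.prod μ :=
    Measure.restrict_eq_self_of_ae_mem hprod_ae
  -- joint continuity of hfun on Sp ×ˢ Ioc E Em
  have hjcont : ContinuousOn (fun p : E3 × ℝ => hfun p.1 p.2) (Sp ×ˢ Ioc E Em) := by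
    have c1 : ContinuousOn (fun p : E3 × ℝ => f x p.2 E p.1) (Sp ×ˢ Ioc E Em) := by
      have hmap : MapsTo (fun p : E3 × ℝ => ((x, p.2, E, p.1) : E3 × ℝ × ℝ × E3))
          (Sp ×ˢ Ioc E Em) (closure G ×ˢ Icc E₀ Em ×ˢ Icc E₀ Em ×ˢ Sp) :=
        fun p hp => ⟨hx, hIocsub hp.2, hEI, hp.1⟩
      exact hf.comp (by fun_prop) hmap
    have c2 : ContinuousOn (fun p : E3 × ℝ => f x E E p.1) (Sp ×ˢ Ioc E Em) := by
      have hmap : MapsTo (fun p : E3 × ℝ => ((x, E, E, p.1) : E3 × ℝ × ℝ × E3))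
          (Sp ×ˢ Ioc E Em) (closure G ×ˢ Icc E₀ Em ×ˢ Icc E₀ Em ×ˢ Sp) :=
        fun p hp => ⟨hx, hEI, hEI, hp.1⟩
      exact hf.comp (by fun_prop) hmap
    have c3 : ContinuousOn (fun p : E3 × ℝ => f' x E E p.1) (Sp ×ˢ Ioc E Em) := by
      have hmap : MapsTo (fun p : E3 × ℝ => ((x, E, E, p.1) : E3 × ℝ × ℝ × E3))
          (Sp ×ˢ Ioc E Em) (closure G ×ˢ Icc E₀ Em ×ˢ Icc E₀ Em ×ˢ Sp) :=
        fun p hp => ⟨hx, hEI, hEI, hp.1⟩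
      exact hf'.comp (by fun_prop) hmap
    apply ContinuousOn.div
    · exact (c1.sub c2).sub (c3.mul (by fun_prop))
    · fun_prop
    · intro p hp
      have h1 : 0 < p.2 - E := by linarith [hp.2.1]
      positivity
  have hmeasprod : MeasurableSet (Sp ×ˢ Ioc E Em) :=
    (isClosed_sphere.measurableSet).prod measurableSet_Ioc
  have hjAESM : AEStronglyMeasurable (fun p : E3 × ℝ => hfun p.1 p.2) (nuS.prod μ) := by
    rw [← hrestr]
    exact hjcont.aestronglyMeasurable hmeasprod
  -- joint integrability
  have hBint : IntegrableOn (fun t : ℝ => C * (t - E) ^ (α - 1)) (Ioc E Em) volume :=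
    rpow_shift_integrableOn (by linarith) hEm.le
  have hnormle : ∀ ω ∈ Sp, ∀ t ∈ Ioc E Em, ‖hfun ω t‖ ≤ C * (t - E) ^ (α - 1) := by
    intro ω hω t ht
    simp only [hhfun]
    exact taylor_quot_norm_le (g := fun t => f x t E ω) (d := f' x E E ω) (K := C) hα (hTay ω hω t ⟨ht.1.le, ht.2⟩) ht
  have hjint : Integrable (fun p : E3 × ℝ => hfun p.1 p.2) (nuS.prod μ) := by
    rw [integrable_prod_iff hjAESM]
    constructor
    · filter_upwards [nuS_ae_sphere] with ω hω
      exact hIoω ω hω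
    · set Cst : ℝ := ∫ t in Ioc E Em, C * (t - E) ^ (α - 1) with hCst
      have hmeas2 : AEStronglyMeasurable (fun ω => ∫ t, ‖hfun ω t‖ ∂μ) nuS :=
        hjAESM.norm.integral_prod_right'
      apply (integrable_const Cst).mono' hmeas2
      filter_upwards [nuS_ae_sphere] with ω hω
      have hb1 : ∫ t, ‖hfun ω t‖ ∂μ ≤ Cst := by
        rw [hCst, hμ]
        apply integral_mono_ae (hIoω ω hω).norm hBint
        rw [Filter.EventuallyLE, ae_restrict_iff' measurableSet_Ioc]
        filter_upwards with t ht
        exact hnormle ω hω t ht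
      have hb0 : 0 ≤ ∫ t, ‖hfun ω t‖ ∂μ := integral_nonneg fun t => norm_nonneg _
      rw [Real.norm_eq_abs, abs_of_nonneg hb0]
      exact hb1
  have hintS1 : Integrable (fun ω => ∫ t, hfun ω t ∂μ) nuS := hjint.integral_prod_left
  have hSwap : ∫ ω, (∫ t, hfun ω t ∂μ) ∂nuS = ∫ t, (∫ ω, hfun ω t ∂nuS) ∂μ :=
    integral_integral_swap hjint
  -- Integrability of S
  have hSrw : S = fun ω => (∫ t, hfun ω t ∂μ) - f x E E ω / (Em - E)
      + f' x E E ω * Real.log (Em - E) := by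
    funext ω
    simp only [hS, hμ, intervalIntegral.integral_of_le hEm.le]
  have e2 : Integrable (fun ω => f x E E ω / (Em - E)) nuS := (hFin E hEI).div_const _
  have e3 : Integrable (fun ω => f' x E E ω * Real.log (Em - E)) nuS := hF'in.mul_const _
  have hSint : Integrable S nuS := by
    rw [hSrw]
    exact (hintS1.sub e2).add e3
  -- the integrated function F and its data
  set F : ℝ → ℝ := fun t => ∫ ω, f x t E ω ∂nuS with hF
  set D : ℝ := ∫ ω, f' x E E ω ∂nuS with hD
  set V : ℝ := ((nuS univ).toReal : ℝ) with hV
  have hnum : ∀ t ∈ Icc E₀ Em,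
      (∫ ω, (f x t E ω - f x E E ω - f' x E E ω * (t - E)) ∂nuS)
        = F t - F E - D * (t - E) := by
    intro t ht
    have h1 : ∫ ω, (f x t E ω - f x E E ω - f' x E E ω * (t - E)) ∂nuS
        = (∫ ω, (f x t E ω - f x E E ω) ∂nuS) - ∫ ω, f' x E E ω * (t - E) ∂nuS :=
      integral_sub ((hFin t ht).sub (hFin E hEI)) (hF'in.mul_const _)
    have h2 : ∫ ω, (f x t E ω - f x E E ω) ∂nuS
        = (∫ ω, f x t E ω ∂nuS) - ∫ ω, f x E E ω ∂nuS :=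
      integral_sub (hFin t ht) (hFin E hEI)
    rw [h1, h2, MeasureTheory.integral_mul_const]
  have hFTay : ∀ t ∈ Icc E Em,
      |F t - F E - D * (t - E)| ≤ (C * V) * ((t - E) ^ α * (t - E)) := by
    intro t ht
    rw [← hnum t (hsubI ht)]
    have hb : ∀ᵐ ω ∂nuS, ‖f x t E ω - f x E E ω - f' x E E ω * (t - E)‖
        ≤ C * ((t - E) ^ α * (t - E)) := by
      filter_upwards [nuS_ae_sphere] with ω hω
      rw [Real.norm_eq_abs]; exact hTay ω hω t ht
    have hni := norm_integral_le_of_norm_le_const hb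
    rw [Real.norm_eq_abs] at hni
    calc |∫ ω, (f x t E ω - f x E E ω - f' x E E ω * (t - E)) ∂nuS|
        ≤ C * ((t - E) ^ α * (t - E)) * V := hni
      _ = (C * V) * ((t - E) ^ α * (t - E)) := by ring
  -- differentiation under the integral sign at E
  have hFderiv : HasDerivWithinAt F D (Ici E) E := by
    rw [hasDerivWithinAt_iff_isLittleO, Asymptotics.isLittleO_iff]
    intro c hc
    have hev1 : Icc E Em ∈ 𝓝[Ici E] E := Icc_mem_nhdsGE_of_mem ⟨le_rfl, hEm⟩
    have ht0 : Tendsto (fun y : ℝ => (C * V) * (y - E) ^ α) (𝓝[Ici E] E) (𝓝 0) := by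
      have h1 : Tendsto (fun y : ℝ => y - E) (𝓝[Ici E] E) (𝓝 0) := by
        have h1' : Tendsto (fun y : ℝ => y - E) (𝓝 E) (𝓝 (E - E)) :=
          (continuous_id.sub continuous_const).tendsto E
        rw [sub_self] at h1'
        exact h1'.mono_left nhdsWithin_le_nhds
      have h2 : Tendsto (fun z : ℝ => z ^ α) (𝓝 (0:ℝ)) (𝓝 0) := by
        have h2' := (Real.continuousAt_rpow_const 0 α (Or.inr hα.le)).tendsto
        rwa [Real.zero_rpow hα.ne'] at h2'
      have h3 := (h2.comp h1).const_mul (C * V)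
      simpa using h3
    have hev2 : ∀ᶠ y in 𝓝[Ici E] E, (C * V) * (y - E) ^ α < c :=
      ht0 (Iio_mem_nhds hc)
    filter_upwards [hev1, hev2] with y hy1 hy2
    have hyE : 0 ≤ y - E := by linarith [hy1.1]
    rw [Real.norm_eq_abs, Real.norm_eq_abs, smul_eq_mul]
    calc |F y - F E - (y - E) * D| = |F y - F E - D * (y - E)| := by ring_nf
      _ ≤ (C * V) * ((y - E) ^ α * (y - E)) := hFTay y hy1
      _ = ((C * V) * (y - E) ^ α) * (y - E) := by ring
      _ ≤ c * (y - E) := mul_le_mul_of_nonneg_right hy2.le hyE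
      _ = c * |y - E| := by rw [abs_of_nonneg hyE]
  -- continuity of F on [E, Em]
  obtain ⟨M, hM⟩ := (((hGbdd.isCompact_closure).prod (isCompact_Icc.prod
      (isCompact_Icc.prod (isCompact_sphere (0:E3) 1)))).exists_bound_of_continuousOn hf)
  have hFcont : ContinuousOn F (Icc E Em) := by
    rw [hF]
    apply continuousOn_of_dominated (bound := fun _ => M)
    · intro t ht; exact (hFin t (hsubI ht)).1
    · intro t ht
      filter_upwards [nuS_ae_sphere] with ω hω
      exact hM (x, t, E, ω) ⟨hx, hsubI ht, hEI, hω⟩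
    · exact integrable_const M
    · filter_upwards [nuS_ae_sphere] with ω hω
      exact (hgω ω hω).mono hsubI
  set hF2 : ℝ → ℝ := fun t => (F t - F E - D * (t - E)) / (t - E) ^ 2 with hhF2
  have hFPF : HasPF2Upper F D E Em
      ((∫ t in E..Em, hF2 t) - F E / (Em - E) + D * Real.log (Em - E)) :=
    hasPF2Upper_of_taylor hEm hα hFcont hFTay
  -- the swap
  have hpoint : EqOn (fun t => ∫ ω, hfun ω t ∂nuS) hF2 (Ioc E Em) := by
    intro t ht
    simp only [hhfun, hhF2]
    rw [MeasureTheory.integral_div]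
    congr 1
    exact hnum t (hIocsub ht)
  have hL2 : (∫ t, (∫ ω, hfun ω t ∂nuS) ∂μ) = ∫ t in E..Em, hF2 t := by
    rw [intervalIntegral.integral_of_le hEm.le, hμ]
    exact setIntegral_congr_fun measurableSet_Ioc hpoint
  have hSL : ∫ ω, S ω ∂nuS
      = (∫ t in E..Em, hF2 t) - F E / (Em - E) + D * Real.log (Em - E) := by
    have g1 : ∫ ω, ((∫ t, hfun ω t ∂μ) - f x E E ω / (Em - E)
          + f' x E E ω * Real.log (Em - E)) ∂nuS
        = (∫ ω, ((∫ t, hfun ω t ∂μ) - f x E E ω / (Em - E)) ∂nuS)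
          + ∫ ω, f' x E E ω * Real.log (Em - E) ∂nuS :=
      integral_add (hintS1.sub e2) e3
    have g2 : ∫ ω, ((∫ t, hfun ω t ∂μ) - f x E E ω / (Em - E)) ∂nuS
        = (∫ ω, (∫ t, hfun ω t ∂μ) ∂nuS) - ∫ ω, f x E E ω / (Em - E) ∂nuS :=
      integral_sub hintS1 e2
    rw [hSrw, g1, g2, MeasureTheory.integral_div, MeasureTheory.integral_mul_const, hSwap, hL2]
  exact ⟨S, (∫ t in E..Em, hF2 t) - F E / (Em - E) + D * Real.log (Em - E),
    hPFω, hSint, hFderiv, hFPF, hSL⟩
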